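/- Let δ > 0 and let x₁, r₁, ε₁, λ₁ : [0,∞) → ℝ be differentiable and F : [0,∞) → ℝ be continuous with F(t) ≤ −δ for all t. Suppose that at every time t with x₁(t) ∈ [−1, 0], the equations x₁' = −(1/2)ε₁x₁F, r₁' = (1/2)r₁ε₁F, ε₁' = −ε₁²F, λ₁' = −(1/2)λ₁ε₁F hold, and assume x₁(0) ∈ [−1, 0), r₁(0) > 0, ε₁(0) > 0. Then there exists a smallest time t̃ ≥ 0 with x₁(t̃) = −1; on [0, t̃] the function x₁ is strictly decreasing (so it stays in [−1, x₁(0)]) and ε₁ is strictly increasing; and at the exit time the values r₁(t̃) = −x₁(0) r₁(0), ε₁(t̃) = ε₁(0)/x₁(0)², λ₁(t̃) = −λ₁(0)/x₁(0) are attained. (This is the statement that trajectories starting in the blown-up critical manifold to the left of the zero set of F reach its attracting boundary {x₁ = −1} in finite time, with limiting values determined by the conserved quantities x = r₁x₁, ε = r₁²ε₁, λ = r₁λ₁.) -/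

import Mathlib

/-- In chart `K₁`, a trajectory of the desingularized canard
system starting in the blown-up critical manifold to the left of the zero set
of `F` (i.e. with `F ≤ -δ < 0` along the solution, `x₁ 0 ∈ [-1,0)`,
`r₁ 0 > 0`, `ε₁ 0 > 0`) reaches the attracting boundary `{x₁ = -1}` at a first
time `t̃ ≥ 0`; on `[0, t̃]` the function `x₁` is strictly decreasing (staying in
`[-1, x₁ 0]`) and `ε₁` is strictly increasing, and the exit values are
determined by the conserved quantities: `r₁ t̃ = -(x₁ 0) (r₁ 0)`,
`ε₁ t̃ = ε₁ 0 / (x₁ 0)²`, `λ₁ t̃ = -(λ₁ 0) / (x₁ 0)`. -/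
theorem chartK1_left_region_reaches_attracting_branch
    (δ : ℝ) (hδ : 0 < δ) (x₁ r₁ ε₁ l₁ F : ℝ → ℝ)
    (hdiff : ∀ t : ℝ, 0 ≤ t → DifferentiableAt ℝ x₁ t ∧ DifferentiableAt ℝ r₁ t ∧
      DifferentiableAt ℝ ε₁ t ∧ DifferentiableAt ℝ l₁ t)
    (hFcont : Continuous F) (hFneg : ∀ t : ℝ, 0 ≤ t → F t ≤ -δ)
    (hx : ∀ t : ℝ, 0 ≤ t → x₁ t ∈ Set.Icc (-1 : ℝ) 0 →
      HasDerivAt x₁ (-(1 / 2) * ε₁ t * x₁ t * F t) t)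
    (hr : ∀ t : ℝ, 0 ≤ t → x₁ t ∈ Set.Icc (-1 : ℝ) 0 →
      HasDerivAt r₁ ((1 / 2) * r₁ t * ε₁ t * F t) t)
    (he : ∀ t : ℝ, 0 ≤ t → x₁ t ∈ Set.Icc (-1 : ℝ) 0 →
      HasDerivAt ε₁ (-(ε₁ t) ^ 2 * F t) t)
    (hl : ∀ t : ℝ, 0 ≤ t → x₁ t ∈ Set.Icc (-1 : ℝ) 0 →
      HasDerivAt l₁ (-(1 / 2) * l₁ t * ε₁ t * F t) t)
    (hx0 : x₁ 0 ∈ Set.Ico (-1 : ℝ) 0) (hr0 : 0 < r₁ 0) (he0 : 0 < ε₁ 0) :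
    ∃ t' : ℝ, 0 ≤ t' ∧ x₁ t' = -1 ∧ (∀ s ∈ Set.Ico (0 : ℝ) t', x₁ s ≠ -1) ∧
      StrictAntiOn x₁ (Set.Icc 0 t') ∧
      (∀ s ∈ Set.Icc (0 : ℝ) t', x₁ s ∈ Set.Icc (-1 : ℝ) (x₁ 0)) ∧
      StrictMonoOn ε₁ (Set.Icc 0 t') ∧
      r₁ t' = -(x₁ 0) * r₁ 0 ∧
      ε₁ t' = ε₁ 0 / (x₁ 0) ^ 2 ∧
      l₁ t' = -(l₁ 0) / x₁ 0 := by
  obtain ⟨hx0l, hx0r⟩ := hx0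
  set c : ℝ := 1 / 2 * ε₁ 0 * (-(x₁ 0)) * δ with hc
  have hcpos : 0 < c := by
    have h1 : 0 < -(x₁ 0) := by linarith
    have h2 : 0 < 1 / 2 * ε₁ 0 * (-(x₁ 0)) := by positivity
    positivity
  set A : Set ℝ := {t | 0 ≤ t ∧ ∀ s ∈ Set.Icc (0:ℝ) t, x₁ s ∈ Set.Icc (-1:ℝ) (x₁ 0)} with hA
  have hA0 : (0:ℝ) ∈ A := by
    refine ⟨le_rfl, fun s hs => ?_⟩
    have : s = 0 := le_antisymm hs.2 hs.1
    rw [this]; exact ⟨hx0l, le_rfl⟩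
  have hmemx : ∀ t ∈ A, ∀ s ∈ Set.Icc (0:ℝ) t, x₁ s ∈ Set.Icc (-1:ℝ) 0 := by
    intro t ht s hs
    obtain ⟨h1, h2⟩ := ht.2 s hs
    exact ⟨h1, le_trans h2 hx0r.le⟩
  have hcontx : ∀ t : ℝ, ContinuousOn x₁ (Set.Icc (0:ℝ) t) := fun t s hs =>
    ((hdiff s hs.1).1.continuousAt).continuousWithinAt
  have hconte : ∀ t : ℝ, ContinuousOn ε₁ (Set.Icc (0:ℝ) t) := fun t s hs =>
    ((hdiff s hs.1).2.2.1.continuousAt).continuousWithinAt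
  have hεmono : ∀ t ∈ A, MonotoneOn ε₁ (Set.Icc 0 t) := by
    intro t ht
    refine monotoneOn_of_deriv_nonneg (convex_Icc 0 t) (hconte t) ?_ ?_
    · intro s hs
      rw [interior_Icc] at hs
      exact ((hdiff s hs.1.le).2.2.1).differentiableWithinAt
    · intro s hs
      rw [interior_Icc] at hs
      have hds := he s hs.1.le (hmemx t ht s ⟨hs.1.le, hs.2.le⟩)
      rw [hds.deriv]
      have hF := hFneg s hs.1.le
      nlinarith [sq_nonneg (ε₁ s)]
  have hεlb : ∀ t ∈ A, ∀ s ∈ Set.Icc (0:ℝ) t, ε₁ 0 ≤ ε₁ s := by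
    intro t ht s hs
    exact hεmono t ht ⟨le_rfl, ht.1⟩ hs hs.1
  have hxdec : ∀ t ∈ A, x₁ t + c * t ≤ x₁ 0 := by
    intro t ht
    have hanti : AntitoneOn (fun s => x₁ s + c * s) (Set.Icc 0 t) := by
      refine antitoneOn_of_deriv_nonpos (convex_Icc 0 t) ?_ ?_ ?_
      · exact (hcontx t).add (continuous_const.mul continuous_id).continuousOn
      · intro s hs
        rw [interior_Icc] at hs
        exact (((hdiff s hs.1.le).1).add
          (((differentiable_const c).mul differentiable_id) s)).differentiableWithinAt
      · intro s hs
        rw [interior_Icc] at hs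
        have hcs : HasDerivAt (fun u : ℝ => c * u) c s := by
          simpa using (hasDerivAt_id s).const_mul c
        have hds : HasDerivAt (fun s => x₁ s + c * s) _ s :=
          (hx s hs.1.le (hmemx t ht s ⟨hs.1.le, hs.2.le⟩)).add hcs
        rw [hds.deriv]
        have hF := hFneg s hs.1.le
        have he1 := hεlb t ht s ⟨hs.1.le, hs.2.le⟩
        have hxs := (ht.2 s ⟨hs.1.le, hs.2.le⟩).2
        have h1 : (-(x₁ 0)) * δ ≤ x₁ s * F s := by nlinarith
        have h2 : 1 / 2 * ε₁ 0 * ((-(x₁ 0)) * δ) ≤ 1 / 2 * ε₁ s * (x₁ s * F s) := by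
          have hb : 0 < (-(x₁ 0)) * δ := by nlinarith
          nlinarith
        rw [hc]; nlinarith
    have := hanti (Set.left_mem_Icc.2 ht.1) (Set.right_mem_Icc.2 ht.1) ht.1
    simpa using this
  have hAbdd : BddAbove A := by
    refine ⟨(x₁ 0 + 1) / c, fun t ht => ?_⟩
    have h1 := hxdec t ht
    have h2 : (-1:ℝ) ≤ x₁ t := (ht.2 t (Set.right_mem_Icc.2 ht.1)).1
    rw [le_div_iff₀ hcpos]
    nlinarith
  set T : ℝ := sSup A with hT
  have hT0 : 0 ≤ T := le_csSup hAbdd hA0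
  have hltmem : ∀ s : ℝ, 0 ≤ s → s < T → x₁ s ∈ Set.Icc (-1:ℝ) (x₁ 0) := by
    intro s hs0 hsT
    obtain ⟨t, htA, hst⟩ := exists_lt_of_lt_csSup ⟨0, hA0⟩ hsT
    exact htA.2 s ⟨hs0, hst.le⟩
  have hTmem : x₁ T ∈ Set.Icc (-1:ℝ) (x₁ 0) := by
    rcases eq_or_lt_of_le hT0 with h0T | h0T
    · rw [← h0T]; exact ⟨hx0l, le_rfl⟩
    · have hcont : Filter.Tendsto x₁ (nhdsWithin T (Set.Iio T)) (nhds (x₁ T)) :=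
        ((hdiff T hT0).1.continuousAt).continuousWithinAt
      refine isClosed_Icc.mem_of_tendsto hcont ?_
      have hIoo : Set.Ioo (0:ℝ) T ∈ nhdsWithin T (Set.Iio T) := by
        rw [mem_nhdsWithin]
        exact ⟨Set.Ioi 0, isOpen_Ioi, h0T, fun u hu => ⟨hu.1, hu.2⟩⟩
      filter_upwards [hIoo] with u hu
      exact hltmem u hu.1.le hu.2
  have hTA : T ∈ A := by
    refine ⟨hT0, fun s hs => ?_⟩
    rcases lt_or_eq_of_le hs.2 with hsT | hsT
    · exact hltmem s hs.1 hsT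
    · rw [hsT]; exact hTmem
  have hxTmem : x₁ T ∈ Set.Icc (-1:ℝ) (x₁ 0) := hTA.2 T (Set.right_mem_Icc.2 hT0)
  have hεT : ε₁ 0 ≤ ε₁ T := hεlb T hTA T (Set.right_mem_Icc.2 hT0)
  -- the exit: x₁ T = -1
  have hxT : x₁ T = -1 := by
    by_contra hne
    have hgt : -1 < x₁ T := lt_of_le_of_ne hxTmem.1 (Ne.symm hne)
    have hxTmem0 : x₁ T ∈ Set.Icc (-1:ℝ) 0 := ⟨hxTmem.1, le_trans hxTmem.2 hx0r.le⟩
    have hd := hx T hT0 hxTmem0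
    have hdneg : -(1 / 2) * ε₁ T * x₁ T * F T < 0 := by
      have hF := hFneg T hT0
      have hxle : x₁ T ≤ x₁ 0 := hxTmem.2
      have hb : 0 < x₁ T * F T := mul_pos_of_neg_of_neg (by linarith) (by linarith)
      have ha : 0 < ε₁ T := by linarith
      nlinarith [mul_pos ha hb]
    have hslope := hasDerivAt_iff_tendsto_slope.1 hd
    have hev1 : ∀ᶠ u in nhdsWithin T (Set.Ioi T), slope x₁ T u < 0 := by
      have h0 : ∀ᶠ u in nhdsWithin T {T}ᶜ, slope x₁ T u < 0 :=
        hslope (Iio_mem_nhds hdneg)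
      exact h0.filter_mono (nhdsWithin_mono T (fun u hu => ne_of_gt hu))
    have hev2 : ∀ᶠ u in nhdsWithin T (Set.Ioi T), -1 < x₁ u := by
      have h0 : ∀ᶠ u in nhds T, x₁ u ∈ Set.Ioi (-1:ℝ) :=
        ((hdiff T hT0).1.continuousAt).eventually_mem (Ioi_mem_nhds hgt)
      exact (h0.mono (fun u hu => hu)).filter_mono nhdsWithin_le_nhds
    have hev : ∀ᶠ u in nhdsWithin T (Set.Ioi T), x₁ u ∈ Set.Icc (-1:ℝ) (x₁ 0) := by
      filter_upwards [hev1, hev2, self_mem_nhdsWithin] with u h1 h2 hu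
      have huT : T < u := hu
      have hlt : x₁ u - x₁ T < 0 := by
        have h4 := mul_neg_of_neg_of_pos h1 (sub_pos.2 huT)
        rwa [slope_def_field, div_mul_cancel₀ _ (sub_ne_zero.2 (ne_of_gt huT))] at h4
      exact ⟨h2.le, by linarith [hxTmem.2]⟩
    obtain ⟨u, huT, hsub⟩ := mem_nhdsGT_iff_exists_Ioc_subset.1 hev
    have huT' : T < u := huT
    have huA : u ∈ A := by
      refine ⟨le_trans hT0 huT'.le, fun s hs => ?_⟩
      rcases le_or_gt s T with hsT | hsT
      · exact hTA.2 s ⟨hs.1, hsT⟩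
      · exact hsub ⟨hsT, hs.2⟩
    exact absurd (le_csSup hAbdd huA) (not_le.2 huT')
  -- strict monotonicity
  have hanti : StrictAntiOn x₁ (Set.Icc 0 T) := by
    refine strictAntiOn_of_deriv_neg (convex_Icc 0 T) (hcontx T) ?_
    intro s hs
    rw [interior_Icc] at hs
    have hds := hx s hs.1.le (hmemx T hTA s ⟨hs.1.le, hs.2.le⟩)
    rw [hds.deriv]
    have hF := hFneg s hs.1.le
    have he1 := hεlb T hTA s ⟨hs.1.le, hs.2.le⟩
    have hxs := (hTA.2 s ⟨hs.1.le, hs.2.le⟩).2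
    have hb : 0 < x₁ s * F s := mul_pos_of_neg_of_neg (by linarith) (by linarith)
    have ha : 0 < ε₁ s := by linarith
    nlinarith [mul_pos ha hb]
  have hεstrict : StrictMonoOn ε₁ (Set.Icc 0 T) := by
    refine strictMonoOn_of_deriv_pos (convex_Icc 0 T) (hconte T) ?_
    intro s hs
    rw [interior_Icc] at hs
    have hds := he s hs.1.le (hmemx T hTA s ⟨hs.1.le, hs.2.le⟩)
    rw [hds.deriv]
    have hF := hFneg s hs.1.le
    have he1 := hεlb T hTA s ⟨hs.1.le, hs.2.le⟩
    have ha : 0 < ε₁ s := by linarith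
    nlinarith [mul_pos (pow_pos ha 2) (show (0:ℝ) < -F s by linarith)]
  -- conserved quantities
  have hconst : ∀ g : ℝ → ℝ, (∀ s ∈ Set.Icc (0:ℝ) T, HasDerivAt g 0 s) → g T = g 0 := by
    intro g hg
    have hcont : ContinuousOn g (Set.Icc 0 T) := fun s hs =>
      ((hg s hs).continuousAt).continuousWithinAt
    have hdiffg : DifferentiableOn ℝ g (interior (Set.Icc (0:ℝ) T)) := fun s hs =>
      ((hg s (interior_subset hs)).differentiableAt).differentiableWithinAt
    have hd0 : ∀ s ∈ interior (Set.Icc (0:ℝ) T), deriv g s = 0 := fun s hs =>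
      (hg s (interior_subset hs)).deriv
    have h1 := monotoneOn_of_deriv_nonneg (convex_Icc 0 T) hcont hdiffg
      (fun s hs => (hd0 s hs).ge)
    have h2 := antitoneOn_of_deriv_nonpos (convex_Icc 0 T) hcont hdiffg
      (fun s hs => (hd0 s hs).le)
    exact le_antisymm (h2 (Set.left_mem_Icc.2 hT0) (Set.right_mem_Icc.2 hT0) hT0)
      (h1 (Set.left_mem_Icc.2 hT0) (Set.right_mem_Icc.2 hT0) hT0)
  have hrx : r₁ T * x₁ T = r₁ 0 * x₁ 0 := by
    refine hconst (fun s => r₁ s * x₁ s) (fun s hs => ?_)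
    have hm := hmemx T hTA s hs
    have hd : HasDerivAt (fun s => r₁ s * x₁ s) _ s := (hr s hs.1 hm).mul (hx s hs.1 hm)
    convert hd using 1
    ring
  have hre : r₁ T ^ 2 * ε₁ T = r₁ 0 ^ 2 * ε₁ 0 := by
    refine hconst (fun s => r₁ s ^ 2 * ε₁ s) (fun s hs => ?_)
    have hm := hmemx T hTA s hs
    have hd : HasDerivAt (fun s => r₁ s ^ 2 * ε₁ s) _ s := ((hr s hs.1 hm).pow 2).mul (he s hs.1 hm)
    convert hd using 1
    simp only [Pi.pow_apply]; ring
  have hrl : r₁ T * l₁ T = r₁ 0 * l₁ 0 := by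
    refine hconst (fun s => r₁ s * l₁ s) (fun s hs => ?_)
    have hm := hmemx T hTA s hs
    have hd : HasDerivAt (fun s => r₁ s * l₁ s) _ s := (hr s hs.1 hm).mul (hl s hs.1 hm)
    convert hd using 1
    ring
  have hx0ne : x₁ 0 ≠ 0 := ne_of_lt hx0r
  have hrT : r₁ T = -(x₁ 0) * r₁ 0 := by
    rw [hxT] at hrx; linear_combination -hrx
  refine ⟨T, hT0, hxT, ?_, hanti, hTA.2, hεstrict, hrT, ?_, ?_⟩
  · intro s hs
    have := hanti ⟨hs.1, hs.2.le⟩ (Set.right_mem_Icc.2 hT0) hs.2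
    rw [hxT] at this
    exact ne_of_gt this
  · rw [hrT] at hre
    rw [eq_div_iff (pow_ne_zero 2 hx0ne)]
    have h : r₁ 0 ^ 2 * (ε₁ T * x₁ 0 ^ 2) = r₁ 0 ^ 2 * ε₁ 0 := by linear_combination hre
    exact mul_left_cancel₀ (pow_ne_zero 2 (ne_of_gt hr0)) h
  · rw [hrT] at hrl
    rw [eq_div_iff hx0ne]
    have h : r₁ 0 * (l₁ T * x₁ 0) = r₁ 0 * (-l₁ 0) := by linear_combination -hrl
    exact mul_left_cancel₀ (ne_of_gt hr0) h
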